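/- Let X, U be discrete random variables with finite supports on a common probability space, and let 𝒰 be the support of U. Then the random vector T* := (p_{U|X}(u | X))_{u∈𝒰} (the posterior distribution of U given X, as a function of X) is a minimal sufficient statistic of X for U: T* is a sufficient statistic of X for U, and every sufficient statistic T of X for U satisfies T ≥ι T*. Consequently, any two minimal sufficient statistics of X for U are informationally equivalent. -/

import Mathlib

namespace Paper

/-- The probability of an event under a probability mass function. -/
noncomputable def pr {Ω : Type} (μ : PMF Ω) (E : Set Ω) : ENNReal :=
  μ.toOuterMeasure E

/-- Conditional independence `X ⊥⊥ Y | Z`: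
`p(x,y,z) p(z) = p(x,z) p(y,z)` for all `x, y, z`. -/
def CondIndep {Ω α β γ : Type} (μ : PMF Ω) (X : Ω → α) (Y : Ω → β) (Z : Ω → γ) : Prop :=
  ∀ (x : α) (y : β) (z : γ),
    pr μ {ω | X ω = x ∧ Y ω = y ∧ Z ω = z} * pr μ {ω | Z ω = z}
      = pr μ {ω | X ω = x ∧ Z ω = z} * pr μ {ω | Y ω = y ∧ Z ω = z}

/-- Unconditional independence `X ⊥⊥ Y`. -/
def Indep {Ω α β : Type} (μ : PMF Ω) (X : Ω → α) (Y : Ω → β) : Prop :=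
  ∀ (x : α) (y : β),
    pr μ {ω | X ω = x ∧ Y ω = y} = pr μ {ω | X ω = x} * pr μ {ω | Y ω = y}

/-- `X ≥ι Y`: `X` functionally determines `Y` (with probability one). -/
def FunDep {Ω α β : Type} (μ : PMF Ω) (X : Ω → α) (Y : Ω → β) : Prop :=
  ∃ f : α → β, ∀ ω ∈ μ.support, Y ω = f (X ω)

/-- `X =ι Y`: informational equivalence. -/
def InfoEq {Ω α β : Type} (μ : PMF Ω) (X : Ω → α) (Y : Ω → β) : Prop :=
  FunDep μ X Y ∧ FunDep μ Y X

/-- The random variable `X` has finite support. -/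
def FinSupp {Ω α : Type} (μ : PMF Ω) (X : Ω → α) : Prop :=
  (X '' μ.support).Finite

/-- The random variable `X` has support of cardinality at most `ℓ`. -/
def CardLE {Ω α : Type} (μ : PMF Ω) (X : Ω → α) (ℓ : ℕ) : Prop :=
  ∃ s : Finset α, s.card ≤ ℓ ∧ ∀ ω ∈ μ.support, X ω ∈ s

/-- `X` is uniformly distributed with support of cardinality `ℓ`. -/
def UniformCard {Ω α : Type} (μ : PMF Ω) (X : Ω → α) (ℓ : ℕ) : Prop :=
  ∃ S : Finset α, S.card = ℓ ∧ (∀ x ∈ S, pr μ {ω | X ω = x} = (ℓ : ENNReal)⁻¹) ∧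
    ∀ x, x ∉ S → pr μ {ω | X ω = x} = 0

/-- The probability mass function of the random variable `X`. -/
noncomputable def distOf {Ω α : Type} (μ : PMF Ω) (X : Ω → α) : α → ENNReal :=
  fun x => pr μ {ω | X ω = x}

/-- `p ⪰ q` : `p` majorizes `q`, i.e. for every `k`, the sum of the `k` largest values
of `p` is at least the sum of the `k` largest values of `q`. -/
def Majorizes (p q : ℕ → ENNReal) : Prop :=
  ∀ s : Finset ℕ, ∃ t : Finset ℕ, t.card ≤ s.card ∧ ∑ x ∈ s, q x ≤ ∑ x ∈ t, p x

/-- `T` is a sufficient statistic of `X` for `U`: `X ≥ι T` and `U ⊥⊥ X | T`. -/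
def SuffStat {Ω α β γ : Type} (μ : PMF Ω) (X : Ω → α) (U : Ω → β) (T : Ω → γ) : Prop :=
  FunDep μ X T ∧ CondIndep μ U X T

/-- `T` is a minimal sufficient statistic of `X` for `U`. -/
def MinSuffStat {Ω α β γ : Type} (μ : PMF Ω) (X : Ω → α) (U : Ω → β) (T : Ω → γ) : Prop :=
  SuffStat μ X U T ∧
    ∀ (δ : Type) (T' : Ω → δ), SuffStat μ X U T' → FunDep μ T' T

/-- Mutual independence of the subfamily `(V i)_{i ∈ s}`: each `V i` (for `i ∈ s`) is
independent of the joint variable of the others. -/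
def MutIndepOn {Ω ι : Type} {β : ι → Type} (μ : PMF Ω) (V : ∀ i, Ω → β i)
    (s : Finset ι) : Prop :=
  ∀ i ∈ s, Indep μ (V i) (fun ω => fun j : {j // j ∈ s ∧ j ≠ i} => V j.1 ω)

/-- Mutual independence of the whole family `(V i)_i`. -/
def MutIndep {Ω ι : Type} {β : ι → Type} (μ : PMF Ω) (V : ∀ i, Ω → β i) : Prop :=
  ∀ i, Indep μ (V i) (fun ω => fun j : {j // j ≠ i} => V j.1 ω)

/-- Mutual independence of `(V i)_{i ∈ C}` for a list `C` of indices. -/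
def MutIndepL {Ω : Type} (μ : PMF Ω) (V : ℕ → Ω → ℕ) (C : List ℕ) : Prop :=
  ∀ i ∈ C, Indep μ (V i) (fun ω => fun j : {j // j ∈ C ∧ j ≠ i} => V j.1 ω)

/-- The joint random variable `(X a)_{a ∈ A}` for a list `A` of indices. -/
def jointOn {Ω : Type} (X : ℕ → Ω → ℕ) (A : List ℕ) : Ω → ({a : ℕ // a ∈ A} → ℕ) :=
  fun ω a => X a.1 ω

/-- The joint random variable `(T i)_{i ∈ S}` for a finset `S` of indices. -/
def jointFin {Ω ι : Type} {β : ι → Type} (T : ∀ i, Ω → β i) (S : Finset ι) :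
    Ω → ((i : {i // i ∈ S}) → β i.1) :=
  fun ω i => T i.1 ω

/-- The set of parents (in-neighbours) of `w` in the directed graph with edge relation `E`. -/
def parentSet {ν : Type} (E : ν → ν → Prop) (w : ν) : Set ν := {v | E v w}

/-- The set of nodes that are neither descendants nor parents of `w`. -/
def nonDescSet {ν : Type} (E : ν → ν → Prop) (w : ν) : Set ν :=
  {v | ¬ Relation.ReflTransGen E w v ∧ ¬ E v w}

/-- The collection of random variables `(X v)_v` satisfies the Bayesian network structure
with edge relation `E`: each variable is conditionally independent of its
non-descendant non-parent variables given its parent variables. -/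
def SatisfiesBN {Ω ν : Type} {β : ν → Type} (μ : PMF Ω) (X : ∀ v, Ω → β v)
    (E : ν → ν → Prop) : Prop :=
  ∀ w : ν, CondIndep μ (X w)
    (fun ω => fun v : nonDescSet E w => X v.1 ω)
    (fun ω => fun v : parentSet E w => X v.1 ω)

/-- `E` is (the edge list of) a directed acyclic graph on the nodes `{0, …, n-1}`. -/
def IsDAG (n : ℕ) (E : List (ℕ × ℕ)) : Prop :=
  (∀ e ∈ E, e.1 < n ∧ e.2 < n) ∧
    ∀ i : ℕ, ¬ Relation.TransGen (fun a c => (a, c) ∈ E) i i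

/-- The edge relation on `Fin n` determined by an edge list. -/
def edgeRelOn (n : ℕ) (E : List (ℕ × ℕ)) : Fin n → Fin n → Prop :=
  fun i j => ((i : ℕ), (j : ℕ)) ∈ E

/-- `(X_0, …, X_{n-1})` satisfies the Bayesian network given by the edge list `E`. -/
def SatisfiesBNn {Ω : Type} (μ : PMF Ω) (n : ℕ) (X : ℕ → Ω → ℕ)
    (E : List (ℕ × ℕ)) : Prop :=
  SatisfiesBN μ (fun i : Fin n => X (i : ℕ)) (edgeRelOn n E)

/-- `(A, C, B) ∈ I(G_1, …, G_m)`: every collection of finitely supported discrete random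
variables satisfying all the network structures in `Gs` satisfies `X_A ⊥⊥ X_B | X_C`. -/
def ImpliedCI (n : ℕ) (Gs : List (List (ℕ × ℕ))) (A C B : List ℕ) : Prop :=
  ∀ (Ω : Type) (μ : PMF Ω) (X : ℕ → Ω → ℕ),
    (∀ i, i < n → FinSupp μ (X i)) →
    (∀ G ∈ Gs, SatisfiesBNn μ n X G) →
    CondIndep μ (jointOn X A) (jointOn X B) (jointOn X C)

/-- Two lists are disjoint as sets. -/
def DisjointL (A B : List ℕ) : Prop := ∀ a ∈ A, a ∉ B

end Paper
namespace Paper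

lemma pr_eq_tsum {Ω : Type} (μ : PMF Ω) (S : Set Ω) : pr μ S = ∑' ω, S.indicator μ ω :=
  PMF.toOuterMeasure_apply μ S

lemma pr_mono {Ω : Type} (μ : PMF Ω) {S S' : Set Ω} (h : S ⊆ S') : pr μ S ≤ pr μ S' :=
  μ.toOuterMeasure.mono h

lemma pr_le_one {Ω : Type} (μ : PMF Ω) (S : Set Ω) : pr μ S ≤ 1 := by
  rw [pr_eq_tsum]
  calc ∑' ω, S.indicator μ ω ≤ ∑' ω, μ ω :=
        ENNReal.tsum_le_tsum fun ω => Set.indicator_le_self _ _ _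
    _ = 1 := μ.tsum_coe

lemma pr_ne_top {Ω : Type} (μ : PMF Ω) (S : Set Ω) : pr μ S ≠ ⊤ :=
  (lt_of_le_of_lt (pr_le_one μ S) ENNReal.one_lt_top).ne

lemma pr_congr {Ω : Type} (μ : PMF Ω) {S S' : Set Ω}
    (h : ∀ ω ∈ μ.support, (ω ∈ S ↔ ω ∈ S')) : pr μ S = pr μ S' := by
  rw [pr_eq_tsum, pr_eq_tsum]
  refine tsum_congr fun ω => ?_
  by_cases hμ : μ ω = 0
  · have e : ∀ T : Set Ω, T.indicator (⇑μ) ω = 0 := by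
      intro T
      by_cases h' : ω ∈ T
      · rw [Set.indicator_of_mem h', hμ]
      · exact Set.indicator_of_notMem h' _
    rw [e S, e S']
  · have hiff := h ω (μ.mem_support_iff ω |>.2 hμ)
    by_cases hS : ω ∈ S
    · rw [Set.indicator_of_mem hS, Set.indicator_of_mem (hiff.1 hS)]
    · rw [Set.indicator_of_notMem hS,
        Set.indicator_of_notMem (fun hc => hS (hiff.2 hc))]

lemma pr_ne_zero {Ω : Type} (μ : PMF Ω) {S : Set Ω} {ω : Ω}
    (hω : ω ∈ μ.support) (hS : ω ∈ S) : pr μ S ≠ 0 := by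
  rw [pr_eq_tsum]
  intro h
  have h2 := ENNReal.tsum_eq_zero.mp h ω
  rw [Set.indicator_of_mem hS] at h2
  exact (μ.mem_support_iff ω |>.1 hω) h2

lemma pr_fiber_sum {Ω α : Type} (μ : PMF Ω) (X : Ω → α) (S : Set Ω) :
    pr μ S = ∑' x, pr μ (S ∩ {ω | X ω = x}) := by
  simp only [pr_eq_tsum]
  rw [ENNReal.tsum_comm]
  refine tsum_congr fun ω => ?_
  by_cases hS : ω ∈ S
  · rw [Set.indicator_of_mem hS, tsum_eq_single (X ω)]
    · simp [Set.indicator_apply, hS]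
    · intro b hb
      have : ω ∉ S ∩ {ω' | X ω' = b} := fun hc => hb (hc.2.symm)
      exact Set.indicator_of_notMem this μ
  · rw [Set.indicator_of_notMem hS]
    refine (ENNReal.tsum_eq_zero.2 fun x => ?_).symm
    exact Set.indicator_of_notMem (fun hc => hS hc.1) μ

/-- if `pr {U = u ∧ X = x} = c * pr {X = x}` for every `x` satisfying `P`, the same
holds for the event `P (X ·)`. -/
lemma key_mul {Ω α β : Type} (μ : PMF Ω) (U : Ω → β) (X : Ω → α) (u : β) (c : ENNReal)
    (P : α → Prop)
    (h : ∀ x, P x → pr μ {ω | U ω = u ∧ X ω = x} = c * pr μ {ω | X ω = x}) :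
    pr μ {ω | U ω = u ∧ P (X ω)} = c * pr μ {ω | P (X ω)} := by
  rw [pr_fiber_sum μ X {ω | U ω = u ∧ P (X ω)}, pr_fiber_sum μ X {ω | P (X ω)},
    ← ENNReal.tsum_mul_left]
  refine tsum_congr fun x => ?_
  by_cases hP : P x
  · have e1 : {ω | U ω = u ∧ P (X ω)} ∩ {ω | X ω = x} = {ω | U ω = u ∧ X ω = x} := by
      ext ω; constructor
      · rintro ⟨⟨h1, _⟩, h3⟩; exact ⟨h1, h3⟩
      · rintro ⟨h1, h3⟩
        refine ⟨⟨h1, ?_⟩, h3⟩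
        rw [show X ω = x from h3]; exact hP
    have e2 : {ω | P (X ω)} ∩ {ω | X ω = x} = {ω | X ω = x} := by
      ext ω; constructor
      · rintro ⟨_, h3⟩; exact h3
      · intro h3
        refine ⟨?_, h3⟩
        have hx3 : X ω = x := h3
        rw [Set.mem_setOf_eq, hx3]; exact hP
    rw [e1, e2, h x hP]
  · have e1 : {ω | U ω = u ∧ P (X ω)} ∩ {ω | X ω = x} = ∅ := by
      ext ω
      simp only [Set.mem_inter_iff, Set.mem_setOf_eq, Set.mem_empty_iff_false, iff_false]
      rintro ⟨⟨_, h2⟩, h3⟩; exact hP (h3 ▸ h2)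
    have e2 : {ω | P (X ω)} ∩ {ω | X ω = x} = ∅ := by
      ext ω
      simp only [Set.mem_inter_iff, Set.mem_setOf_eq, Set.mem_empty_iff_false, iff_false]
      rintro ⟨h2, h3⟩; exact hP (h3 ▸ h2)
    rw [e1, e2]
    simp [pr, MeasureTheory.OuterMeasure.empty]

lemma pr_empty {Ω : Type} (μ : PMF Ω) : pr μ (∅ : Set Ω) = 0 := by
  simp [pr]

/-- The posterior distribution of `U` given `X`, as a function of `X`, is a minimal
sufficient statistic of `X` for `U`; consequently, any two minimal sufficient statistics
of `X` for `U` are informationally equivalent. -/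
theorem posterior_is_minimal_sufficient {Ω α β : Type} (μ : PMF Ω)
    (X : Ω → α) (U : Ω → β)
    (hX : FinSupp μ X) (hU : FinSupp μ U) :
    MinSuffStat μ X U
      (fun ω => fun u : {u : β // pr μ {ω' | U ω' = u} ≠ 0} =>
        pr μ {ω' | U ω' = u.1 ∧ X ω' = X ω} / pr μ {ω' | X ω' = X ω}) ∧
    ∀ (γ δ : Type) (T1 : Ω → γ) (T2 : Ω → δ),
      MinSuffStat μ X U T1 → MinSuffStat μ X U T2 → InfoEq μ T1 T2 := by
  classical
  set fhat : α → ({u : β // pr μ {ω' | U ω' = u} ≠ 0} → ENNReal) :=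
    fun x => fun u => pr μ {ω' | U ω' = u.1 ∧ X ω' = x} / pr μ {ω' | X ω' = x} with hfhat
  constructor
  · constructor
    · -- T* is a sufficient statistic
      constructor
      · -- FunDep μ X T*
        exact ⟨fhat, fun ω _ => rfl⟩
      · -- CondIndep μ U X T*
        intro u x z
        by_cases hz : fhat x = z
        · -- the fibers with f x = z
          have e1 : {ω | U ω = u ∧ X ω = x ∧ fhat (X ω) = z} = {ω | U ω = u ∧ X ω = x} := by
            ext ω
            simp only [Set.mem_setOf_eq, and_congr_right_iff]
            intro _
            constructor
            · rintro ⟨h1, _⟩; exact h1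
            · intro h1; exact ⟨h1, h1 ▸ hz⟩
          have e2 : {ω | X ω = x ∧ fhat (X ω) = z} = {ω | X ω = x} := by
            ext ω
            simp only [Set.mem_setOf_eq]
            constructor
            · rintro ⟨h1, _⟩; exact h1
            · intro h1; exact ⟨h1, h1 ▸ hz⟩
          show pr μ {ω | U ω = u ∧ X ω = x ∧ fhat (X ω) = z} * pr μ {ω | fhat (X ω) = z}
              = pr μ {ω | U ω = u ∧ fhat (X ω) = z} * pr μ {ω | X ω = x ∧ fhat (X ω) = z}
          rw [e1, e2]
          by_cases hu : pr μ {ω' | U ω' = u} = 0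
          · have z1 : pr μ {ω | U ω = u ∧ X ω = x} = 0 :=
              le_antisymm (le_trans (pr_mono μ (fun ω h => h.1)) hu.le) zero_le
            have z2 : pr μ {ω | U ω = u ∧ fhat (X ω) = z} = 0 :=
              le_antisymm (le_trans (pr_mono μ (fun ω h => h.1)) hu.le) zero_le
            rw [z1, z2, zero_mul, zero_mul]
          · set c : ENNReal := z ⟨u, hu⟩ with hc
            have hper : ∀ x', fhat x' = z →
                pr μ {ω | U ω = u ∧ X ω = x'} = c * pr μ {ω | X ω = x'} := by
              intro x' hx'
              have hcv : c = pr μ {ω' | U ω' = u ∧ X ω' = x'} / pr μ {ω' | X ω' = x'} := by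
                rw [hc, ← hx']
              by_cases hx0 : pr μ {ω | X ω = x'} = 0
              · have : pr μ {ω | U ω = u ∧ X ω = x'} = 0 :=
                  le_antisymm (le_trans (pr_mono μ (fun ω h => h.2)) hx0.le) zero_le
                rw [this, hx0, mul_zero]
              · rw [hcv, ENNReal.div_mul_cancel hx0 (pr_ne_top μ _)]
            have hz2 : pr μ {ω | U ω = u ∧ fhat (X ω) = z}
                = c * pr μ {ω | fhat (X ω) = z} :=
              key_mul μ U X u c (fun x' => fhat x' = z) hper
            rw [hz2, hper x hz]
            ring
        · -- f x ≠ z : both sides vanish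
          have e1 : {ω | U ω = u ∧ X ω = x ∧ fhat (X ω) = z} = ∅ := by
            ext ω
            simp only [Set.mem_setOf_eq, Set.mem_empty_iff_false, iff_false]
            rintro ⟨_, h2, h3⟩; exact hz (h2 ▸ h3)
          have e2 : {ω | X ω = x ∧ fhat (X ω) = z} = ∅ := by
            ext ω
            simp only [Set.mem_setOf_eq, Set.mem_empty_iff_false, iff_false]
            rintro ⟨h2, h3⟩; exact hz (h2 ▸ h3)
          show pr μ {ω | U ω = u ∧ X ω = x ∧ fhat (X ω) = z} * pr μ {ω | fhat (X ω) = z}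
              = pr μ {ω | U ω = u ∧ fhat (X ω) = z} * pr μ {ω | X ω = x ∧ fhat (X ω) = z}
          rw [e1, e2, pr_empty, zero_mul, mul_zero]
    · -- minimality
      rintro δ T ⟨⟨g, hg⟩, hci⟩
      refine ⟨fun t => fun u => pr μ {ω' | U ω' = u.1 ∧ T ω' = t} / pr μ {ω' | T ω' = t},
        fun ω hω => ?_⟩
      funext u
      show pr μ {ω' | U ω' = u.1 ∧ X ω' = X ω} / pr μ {ω' | X ω' = X ω}
          = pr μ {ω' | U ω' = u.1 ∧ T ω' = T ω} / pr μ {ω' | T ω' = T ω}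
      have hx : pr μ {ω' | X ω' = X ω} ≠ 0 := pr_ne_zero μ hω rfl
      have ht : pr μ {ω' | T ω' = T ω} ≠ 0 := pr_ne_zero μ hω rfl
      have hA : pr μ {ω' | U ω' = u.1 ∧ X ω' = X ω ∧ T ω' = T ω}
          = pr μ {ω' | U ω' = u.1 ∧ X ω' = X ω} := by
        refine pr_congr μ fun ω' hω' => ?_
        simp only [Set.mem_setOf_eq, and_congr_right_iff]
        intro _
        constructor
        · rintro ⟨h1, _⟩; exact h1
        · intro h1
          refine ⟨h1, ?_⟩
          rw [hg ω' hω', hg ω hω, h1]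
      have hB : pr μ {ω' | X ω' = X ω ∧ T ω' = T ω} = pr μ {ω' | X ω' = X ω} := by
        refine pr_congr μ fun ω' hω' => ?_
        simp only [Set.mem_setOf_eq]
        constructor
        · rintro ⟨h1, _⟩; exact h1
        · intro h1
          refine ⟨h1, ?_⟩
          rw [hg ω' hω', hg ω hω, h1]
      have hCI := hci u.1 (X ω) (T ω)
      rw [hA, hB] at hCI
      rw [ENNReal.div_eq_div_iff ht (pr_ne_top μ _) hx (pr_ne_top μ _)]
      rw [mul_comm] at hCI
      rw [hCI, mul_comm]
  · rintro γ δ T1 T2 h1 h2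
    exact ⟨h2.2 γ T1 h1.1, h1.2 δ T2 h2.1⟩

end Paper
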